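/- arXiv:1109.3429 — 4 statements merged into one kernel-verified Lean document; each statement's English description precedes it below -/
import Mathlib

section
/- The bicomplex Schwarz inequality holds: for all |ψ⟩, |φ⟩ in a bicomplex inner product space M, |⟨ψ|φ⟩| ≤ √2·‖ψ‖·‖φ‖, where |·| is the Euclidean norm on bicomplex numbers and ‖·‖ the induced norm on M. -/
/-- Bicomplex numbers `w = z₁ + z₂ i₂` with `z₁ z₂ ∈ ℂ(i₁)`. -/
@[ext] structure BC where
  re : ℂ
  im : ℂ

namespace BC

instance : Zero BC := ⟨⟨0, 0⟩⟩
instance : One BC := ⟨⟨1, 0⟩⟩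
instance : Add BC := ⟨fun s t => ⟨s.re + t.re, s.im + t.im⟩⟩
instance : Neg BC := ⟨fun s => ⟨-s.re, -s.im⟩⟩
instance : Mul BC := ⟨fun s t => ⟨s.re * t.re - s.im * t.im, s.re * t.im + s.im * t.re⟩⟩

@[simp] theorem zero_re : (0 : BC).re = 0 := rfl
@[simp] theorem zero_im : (0 : BC).im = 0 := rfl
@[simp] theorem one_re : (1 : BC).re = 1 := rfl
@[simp] theorem one_im : (1 : BC).im = 0 := rfl
@[simp] theorem add_re (s t : BC) : (s + t).re = s.re + t.re := rfl
@[simp] theorem add_im (s t : BC) : (s + t).im = s.im + t.im := rfl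
@[simp] theorem neg_re (s : BC) : (-s).re = -s.re := rfl
@[simp] theorem neg_im (s : BC) : (-s).im = -s.im := rfl
@[simp] theorem mul_re (s t : BC) : (s * t).re = s.re * t.re - s.im * t.im := rfl
@[simp] theorem mul_im (s t : BC) : (s * t).im = s.re * t.im + s.im * t.re := rfl

instance commRing : CommRing BC where
  add_assoc a b c := by ext <;> simp <;> ring
  zero_add a := by ext <;> simp
  add_zero a := by ext <;> simp
  add_comm a b := by ext <;> simp <;> ring
  left_distrib a b c := by ext <;> simp <;> ring
  right_distrib a b c := by ext <;> simp <;> ring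
  zero_mul a := by ext <;> simp
  mul_zero a := by ext <;> simp
  mul_assoc a b c := by ext <;> simp <;> ring
  one_mul a := by ext <;> simp
  mul_one a := by ext <;> simp
  neg_add_cancel a := by ext <;> simp
  mul_comm a b := by ext <;> simp <;> ring
  nsmul := nsmulRec
  zsmul := zsmulRec

/-- The imaginary unit `i₁`. -/
def i1 : BC := ⟨Complex.I, 0⟩
/-- The imaginary unit `i₂`. -/
def i2 : BC := ⟨0, 1⟩
/-- The hyperbolic unit `j = i₁ i₂`. -/
def jh : BC := i1 * i2
/-- The idempotent `e₁ = (1 + j)/2`. -/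
noncomputable def e1 : BC := ⟨1/2, Complex.I/2⟩
/-- The idempotent `e₂ = (1 - j)/2`. -/
noncomputable def e2 : BC := ⟨1/2, -(Complex.I/2)⟩
/-- The embedding of `ℂ(i₁)` into the bicomplex numbers. -/
def C1 (z : ℂ) : BC := ⟨z, 0⟩
/-- First idempotent component `ẑ₁ = z₁ - z₂ i₁`. -/
def P1 (w : BC) : ℂ := w.re - w.im * Complex.I
/-- Second idempotent component `ẑ₂ = z₁ + z₂ i₁`. -/
def P2 (w : BC) : ℂ := w.re + w.im * Complex.I
/-- The Euclidean `ℝ⁴`-norm `|w| = √(|z₁|² + |z₂|²)`. -/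
noncomputable def enorm (w : BC) : ℝ := Real.sqrt (‖w.re‖ ^ 2 + ‖w.im‖ ^ 2)
/-- The conjugation `w^{†₁} = z̄₁ + z̄₂ i₂`. -/
def dag1 (w : BC) : BC := ⟨starRingEnd ℂ w.re, starRingEnd ℂ w.im⟩
/-- The conjugation `w^{†₂} = z₁ - z₂ i₂`. -/
def dag2 (w : BC) : BC := ⟨w.re, -w.im⟩
/-- The conjugation `w^{†₃} = z̄₁ - z̄₂ i₂`. -/
def dag3 (w : BC) : BC := ⟨starRingEnd ℂ w.re, -(starRingEnd ℂ w.im)⟩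

end BC

/-- A bicomplex scalar product on a module over the bicomplex numbers. -/
structure BCInner (M : Type*) [AddCommGroup M] [Module BC M] where
  inner : M → M → BC
  add_right : ∀ ψ φ χ : M, inner ψ (φ + χ) = inner ψ φ + inner ψ χ
  smul_right : ∀ (s : BC) (ψ φ : M), inner ψ (s • φ) = s * inner ψ φ
  conj_symm : ∀ ψ φ : M, inner ψ φ = BC.dag3 (inner φ ψ)
  hyper_pos : ∀ ψ : M, (BC.P1 (inner ψ ψ)).im = 0 ∧ 0 ≤ (BC.P1 (inner ψ ψ)).re ∧
      (BC.P2 (inner ψ ψ)).im = 0 ∧ 0 ≤ (BC.P2 (inner ψ ψ)).re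
  definite : ∀ ψ : M, inner ψ ψ = 0 → ψ = 0

/-- The norm induced by a bicomplex scalar product:
`‖φ‖ = (1/√2) √((φ₁,φ₁)₁ + (φ₂,φ₂)₂) = |√((φ,φ))|`. -/
noncomputable def bnorm {M : Type*} [AddCommGroup M] [Module BC M] (S : BCInner M) (φ : M) : ℝ :=
  (1 / Real.sqrt 2) * Real.sqrt ((BC.P1 (S.inner φ φ)).re + (BC.P2 (S.inner φ φ)).re)

/-- Completeness of a bicomplex inner product space with respect to the induced norm. -/
def BCComplete {M : Type*} [AddCommGroup M] [Module BC M] (S : BCInner M) : Prop :=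
  ∀ f : ℕ → M, (∀ ε > 0, ∃ N : ℕ, ∀ m ≥ N, ∀ n ≥ N, bnorm S (f m - f n) < ε) →
    ∃ φ : M, Filter.Tendsto (fun n => bnorm S (f n - φ)) Filter.atTop (nhds 0)

/-- Separability: existence of a countable dense subset. -/
def BCSeparable {M : Type*} [AddCommGroup M] [Module BC M] (S : BCInner M) : Prop :=
  ∃ D : Set M, D.Countable ∧ ∀ φ : M, ∀ ε > 0, ∃ ψ ∈ D, bnorm S (φ - ψ) < ε

theorem BC.dag3_add (s t : BC) : BC.dag3 (s + t) = BC.dag3 s + BC.dag3 t := by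
  ext <;> simp [BC.dag3] <;> ring

theorem BC.dag3_mul (s t : BC) : BC.dag3 (s * t) = BC.dag3 s * BC.dag3 t := by
  ext <;> simp [BC.dag3] <;> ring

/-- Cauchy–Schwarz for one idempotent component. -/
theorem component_schwarz {M : Type*} [AddCommGroup M] [Module BC M] (S : BCInner M)
    (p : BC → ℂ)
    (hadd : ∀ s t, p (s + t) = p s + p t)
    (hmul : ∀ s t, p (s * t) = p s * p t)
    (hdag : ∀ s, p (BC.dag3 s) = starRingEnd ℂ (p s))
    (hC1 : ∀ c : ℂ, p (BC.C1 c) = c)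
    (hre : ∀ χ : M, (p (S.inner χ χ)).im = 0 ∧ 0 ≤ (p (S.inner χ χ)).re)
    (ψ φ : M) :
    ‖p (S.inner ψ φ)‖ ^ 2 ≤ (p (S.inner ψ ψ)).re * (p (S.inner φ φ)).re := by
  have add_left : ∀ a b c : M, S.inner (a + b) c = S.inner a c + S.inner b c := by
    intro a b c
    rw [S.conj_symm (a + b) c, S.add_right, BC.dag3_add, ← S.conj_symm, ← S.conj_symm]
  have smul_left : ∀ (s : BC) (a c : M), S.inner (s • a) c = BC.dag3 s * S.inner a c := by
    intro s a c
    rw [S.conj_symm (s • a) c, S.smul_right, BC.dag3_mul, ← S.conj_symm]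
  obtain ⟨hAim, hAre⟩ := hre ψ
  obtain ⟨hBim, hBre⟩ := hre φ
  have hYX : p (S.inner φ ψ) = starRingEnd ℂ (p (S.inner ψ φ)) := by
    have h1 : p (S.inner ψ φ) = starRingEnd ℂ (p (S.inner φ ψ)) := by
      rw [S.conj_symm ψ φ, hdag]
    rw [h1, Complex.conj_conj]
  have expand : ∀ s : BC, S.inner (ψ + s • φ) (ψ + s • φ)
      = S.inner ψ ψ + s * S.inner ψ φ + BC.dag3 s * S.inner φ ψ
        + BC.dag3 s * (s * S.inner φ φ) := by
    intro s
    rw [S.add_right, add_left, add_left, S.smul_right, smul_left, S.smul_right, smul_left]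
    ring
  have hkey : ∀ t : ℝ,
      0 ≤ (Complex.normSq (p (S.inner ψ φ)) * (p (S.inner φ φ)).re) * (t * t)
        + (-2 * Complex.normSq (p (S.inner ψ φ))) * t + (p (S.inner ψ ψ)).re := by
    intro t
    have h0 := (hre (ψ + (BC.C1 (-(t : ℂ) * starRingEnd ℂ (p (S.inner ψ φ)))) • φ)).2
    rw [expand] at h0
    simp only [hadd, hmul, hdag, hC1, hYX] at h0
    simp only [Complex.add_re, Complex.mul_re, Complex.mul_im, Complex.neg_re, Complex.neg_im,
      Complex.conj_re, Complex.conj_im, Complex.ofReal_re, Complex.ofReal_im, hAim, hBim,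
      Complex.normSq_apply, neg_mul, neg_neg, mul_zero, zero_mul, sub_zero, zero_sub,
      mul_neg] at h0 ⊢
    nlinarith [h0]
  have hd := discrim_le_zero hkey
  rw [discrim] at hd
  have hm : 0 ≤ Complex.normSq (p (S.inner ψ φ)) := Complex.normSq_nonneg _
  have habs : ‖p (S.inner ψ φ)‖ ^ 2 = Complex.normSq (p (S.inner ψ φ)) :=
    Complex.sq_norm _
  nlinarith [hd, hm, mul_nonneg hAre hBre]

/-- the bicomplex Schwarz inequality `|⟨ψ|φ⟩| ≤ √2 ‖ψ‖ ‖φ‖`. -/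
theorem bicomplex_schwarz_inequality {M : Type*} [AddCommGroup M] [Module BC M]
    (S : BCInner M) (ψ φ : M) :
    BC.enorm (S.inner ψ φ) ≤ Real.sqrt 2 * bnorm S ψ * bnorm S φ := by
  have hP1 := component_schwarz S BC.P1
    (by intro s t; simp [BC.P1]; ring)
    (by intro s t
        simp only [BC.P1, BC.mul_re, BC.mul_im]
        linear_combination (-(s.im * t.im)) * Complex.I_sq)
    (by intro s
        simp only [BC.P1, BC.dag3, map_sub, map_mul, Complex.conj_I]
        push_cast
        ring_nf)
    (by intro c; simp [BC.P1, BC.C1])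
    (fun χ => ⟨(S.hyper_pos χ).1, (S.hyper_pos χ).2.1⟩) ψ φ
  have hP2 := component_schwarz S BC.P2
    (by intro s t; simp [BC.P2]; ring)
    (by intro s t
        simp only [BC.P2, BC.mul_re, BC.mul_im]
        linear_combination (-(s.im * t.im)) * Complex.I_sq)
    (by intro s
        simp only [BC.P2, BC.dag3, map_add, map_sub, map_mul, map_neg, Complex.conj_I]
        ring_nf)
    (by intro c; simp [BC.P2, BC.C1])
    (fun χ => ⟨(S.hyper_pos χ).2.2.1, (S.hyper_pos χ).2.2.2⟩) ψ φ
  set W := S.inner ψ φ with hW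
  set A1 := (BC.P1 (S.inner ψ ψ)).re
  set A2 := (BC.P2 (S.inner ψ ψ)).re
  set B1 := (BC.P1 (S.inner φ φ)).re
  set B2 := (BC.P2 (S.inner φ φ)).re
  have hA1 : 0 ≤ A1 := (S.hyper_pos ψ).2.1
  have hA2 : 0 ≤ A2 := (S.hyper_pos ψ).2.2.2
  have hB1 : 0 ≤ B1 := (S.hyper_pos φ).2.1
  have hB2 : 0 ≤ B2 := (S.hyper_pos φ).2.2.2
  have hsum : ‖W.re‖ ^ 2 + ‖W.im‖ ^ 2
      = (‖BC.P1 W‖ ^ 2 + ‖BC.P2 W‖ ^ 2) / 2 := by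
    simp only [Complex.sq_norm, Complex.normSq_apply, BC.P1, BC.P2, Complex.sub_re,
      Complex.sub_im, Complex.add_re, Complex.add_im, Complex.mul_re, Complex.mul_im,
      Complex.I_re, Complex.I_im]
    ring
  have hle : ‖W.re‖ ^ 2 + ‖W.im‖ ^ 2 ≤ (A1 + A2) * (B1 + B2) / 2 := by
    rw [hsum]
    nlinarith [hP1, hP2, mul_nonneg hA1 hB2, mul_nonneg hA2 hB1]
  have h2 : (0 : ℝ) < Real.sqrt 2 := Real.sqrt_pos.mpr (by norm_num)
  rw [BC.enorm, bnorm, bnorm]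
  have ha : 0 ≤ A1 + A2 := by linarith
  have hrhs : Real.sqrt 2 * (1 / Real.sqrt 2 * Real.sqrt (A1 + A2))
      * (1 / Real.sqrt 2 * Real.sqrt (B1 + B2))
      = Real.sqrt ((A1 + A2) * (B1 + B2) / 2) := by
    rw [Real.sqrt_div (mul_nonneg ha (by linarith)), Real.sqrt_mul ha]
    rw [eq_div_iff h2.ne']
    field_simp
  rw [hrhs]
  exact Real.sqrt_le_sqrt hle
end

section
/- (Best Approximation Theorem) Let {|ψ_l⟩} be an orthonormal sequence in a bicomplex Hilbert space M and α₀,…,αₙ bicomplex numbers. Then for every |ψ⟩ ∈ M, ‖|ψ⟩ − Σ_{l=0}^{n} α_l|ψ_l⟩‖ ≥ ‖|ψ⟩ − Σ_{l=0}^{n} ⟨ψ_l|ψ⟩|ψ_l⟩‖. -/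
namespace BestApproxAux

open BC

lemma dag3_add' (s t : BC) : BC.dag3 (s + t) = BC.dag3 s + BC.dag3 t := by
  ext <;> simp [BC.dag3, map_add] <;> ring

lemma dag3_mul' (s t : BC) : BC.dag3 (s * t) = BC.dag3 s * BC.dag3 t := by
  ext <;> simp [BC.dag3, map_mul, map_sub, map_add] <;> ring

lemma dag3_neg' (s : BC) : BC.dag3 (-s) = -BC.dag3 s := by
  ext <;> simp [BC.dag3, map_neg]

lemma dag3_sub' (s t : BC) : BC.dag3 (s - t) = BC.dag3 s - BC.dag3 t := by
  rw [sub_eq_add_neg, sub_eq_add_neg, dag3_add', dag3_neg']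

/-- `P1` as an additive monoid hom. -/
def P1hom : BC →+ ℂ :=
  AddMonoidHom.mk' BC.P1 (by intro a b; simp [BC.P1]; ring)

/-- `P2` as an additive monoid hom. -/
def P2hom : BC →+ ℂ :=
  AddMonoidHom.mk' BC.P2 (by intro a b; simp [BC.P2]; ring)

lemma P1_self_dag3 (w : BC) : (BC.P1 (w * BC.dag3 w)).re = Complex.normSq (BC.P1 w) := by
  simp [BC.P1, BC.dag3, Complex.normSq_apply, Complex.mul_re, Complex.mul_im,
    Complex.sub_re, Complex.sub_im, Complex.add_re, Complex.add_im]
  ring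

lemma P2_self_dag3 (w : BC) : (BC.P2 (w * BC.dag3 w)).re = Complex.normSq (BC.P2 w) := by
  simp [BC.P2, BC.dag3, Complex.normSq_apply, Complex.mul_re, Complex.mul_im,
    Complex.sub_re, Complex.sub_im, Complex.add_re, Complex.add_im]
  ring

variable {M : Type*} [AddCommGroup M] [Module BC M] (S : BCInner M)

lemma inner_zero_right (φ : M) : S.inner φ 0 = 0 := by
  have h := S.smul_right 0 φ 0
  simpa using h

lemma inner_neg_right (φ χ : M) : S.inner φ (-χ) = -S.inner φ χ := by
  have h := S.smul_right (-1) φ χ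
  simpa using h

lemma inner_sub_right (φ a b : M) : S.inner φ (a - b) = S.inner φ a - S.inner φ b := by
  rw [sub_eq_add_neg, S.add_right, inner_neg_right, sub_eq_add_neg]

lemma inner_sum_right (φ : M) (s : Finset ℕ) (f : ℕ → M) :
    S.inner φ (∑ l ∈ s, f l) = ∑ l ∈ s, S.inner φ (f l) :=
  map_sum (AddMonoidHom.mk' (S.inner φ) (S.add_right φ)) f s

lemma inner_add_left (a b φ : M) : S.inner (a + b) φ = S.inner a φ + S.inner b φ := by
  rw [S.conj_symm, S.add_right, dag3_add', ← S.conj_symm, ← S.conj_symm]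

lemma inner_sub_left (a b φ : M) : S.inner (a - b) φ = S.inner a φ - S.inner b φ := by
  rw [S.conj_symm, inner_sub_right, dag3_sub', ← S.conj_symm, ← S.conj_symm]

lemma inner_smul_left (s : BC) (a φ : M) :
    S.inner (s • a) φ = BC.dag3 s * S.inner a φ := by
  rw [S.conj_symm, S.smul_right, dag3_mul', ← S.conj_symm]

lemma inner_sum_left (φ : M) (s : Finset ℕ) (f : ℕ → M) :
    S.inner (∑ l ∈ s, f l) φ = ∑ l ∈ s, S.inner (f l) φ :=
  map_sum (AddMonoidHom.mk' (fun x => S.inner x φ) (fun a b => inner_add_left S a b φ)) f s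

end BestApproxAux

/-- Best Approximation Theorem: for an orthonormal sequence `{ψ_l}` in a
bicomplex Hilbert space and any bicomplex scalars `α₀, …, αₙ`,
`‖ψ - Σ α_l ψ_l‖ ≥ ‖ψ - Σ ⟨ψ_l|ψ⟩ ψ_l‖`. -/
theorem bicomplex_best_approximation {M : Type*} [AddCommGroup M] [Module BC M]
    (S : BCInner M) (hcomplete : BCComplete S)
    (ψseq : ℕ → M)
    (horth : ∀ l m : ℕ, S.inner (ψseq l) (ψseq m) = if l = m then 1 else 0)
    (n : ℕ) (α : ℕ → BC) (ψ : M) :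
    bnorm S (ψ - ∑ l ∈ Finset.range (n + 1), α l • ψseq l) ≥
      bnorm S (ψ - ∑ l ∈ Finset.range (n + 1), S.inner (ψseq l) ψ • ψseq l) := by
  classical
  open BestApproxAux in
  set r := Finset.range (n + 1) with hr
  set β : ℕ → BC := fun l => S.inner (ψseq l) ψ with hβ
  -- expansion of the squared "norm" for arbitrary coefficients γ
  have expand : ∀ γ : ℕ → BC,
      S.inner (ψ - ∑ l ∈ r, γ l • ψseq l) (ψ - ∑ l ∈ r, γ l • ψseq l) =
        S.inner ψ ψ - (∑ l ∈ r, BC.dag3 (β l) * γ l) - (∑ l ∈ r, BC.dag3 (γ l) * β l)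
          + ∑ l ∈ r, BC.dag3 (γ l) * γ l := by
    intro γ
    have h1 : S.inner ψ (∑ l ∈ r, γ l • ψseq l) = ∑ l ∈ r, BC.dag3 (β l) * γ l := by
      rw [inner_sum_right]
      refine Finset.sum_congr rfl fun l _ => ?_
      rw [S.smul_right, S.conj_symm ψ (ψseq l), mul_comm]
    have h2 : S.inner (∑ l ∈ r, γ l • ψseq l) ψ = ∑ l ∈ r, BC.dag3 (γ l) * β l := by
      rw [inner_sum_left]
      refine Finset.sum_congr rfl fun l _ => ?_
      rw [BestApproxAux.inner_smul_left]
    have h3 : S.inner (∑ l ∈ r, γ l • ψseq l) (∑ l ∈ r, γ l • ψseq l) =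
        ∑ l ∈ r, BC.dag3 (γ l) * γ l := by
      rw [inner_sum_left]
      refine Finset.sum_congr rfl fun l hl => ?_
      rw [BestApproxAux.inner_smul_left, inner_sum_right]
      have : ∑ m ∈ r, S.inner (ψseq l) (γ m • ψseq m) = γ l := by
        have : ∀ m ∈ r, S.inner (ψseq l) (γ m • ψseq m) =
            if l = m then γ m else 0 := by
          intro m _
          rw [S.smul_right, horth]
          by_cases h : l = m <;> simp [h]
        rw [Finset.sum_congr rfl this, Finset.sum_ite_eq]
        simp [hr, Finset.mem_range.mp hl]
      rw [this]
    rw [BestApproxAux.inner_sub_left, BestApproxAux.inner_sub_right, BestApproxAux.inner_sub_right, h1, h2, h3]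
    ring
  have key : S.inner (ψ - ∑ l ∈ r, α l • ψseq l) (ψ - ∑ l ∈ r, α l • ψseq l) =
      S.inner (ψ - ∑ l ∈ r, β l • ψseq l) (ψ - ∑ l ∈ r, β l • ψseq l)
        + ∑ l ∈ r, (α l - β l) * BC.dag3 (α l - β l) := by
    rw [expand α, expand β]
    have hterm : ∀ l ∈ r, (α l - β l) * BC.dag3 (α l - β l) =
        BC.dag3 (α l) * α l - BC.dag3 (β l) * α l - BC.dag3 (α l) * β l
          + BC.dag3 (β l) * β l := by
      intro l _
      rw [dag3_sub']
      ring
    rw [Finset.sum_congr rfl hterm]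
    simp only [Finset.sum_add_distrib, Finset.sum_sub_distrib]
    ring
  -- compare the real quantities
  set D1 := S.inner (ψ - ∑ l ∈ r, α l • ψseq l) (ψ - ∑ l ∈ r, α l • ψseq l) with hD1
  set D2 := S.inner (ψ - ∑ l ∈ r, β l • ψseq l) (ψ - ∑ l ∈ r, β l • ψseq l) with hD2
  have hineq : (BC.P1 D2).re + (BC.P2 D2).re ≤ (BC.P1 D1).re + (BC.P2 D1).re := by
    rw [key]
    have hP1 : BC.P1 (D2 + ∑ l ∈ r, (α l - β l) * BC.dag3 (α l - β l)) =
        BC.P1 D2 + ∑ l ∈ r, BC.P1 ((α l - β l) * BC.dag3 (α l - β l)) := by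
      rw [show BC.P1 = ⇑P1hom from rfl, map_add, map_sum]
    have hP2 : BC.P2 (D2 + ∑ l ∈ r, (α l - β l) * BC.dag3 (α l - β l)) =
        BC.P2 D2 + ∑ l ∈ r, BC.P2 ((α l - β l) * BC.dag3 (α l - β l)) := by
      rw [show BC.P2 = ⇑P2hom from rfl, map_add, map_sum]
    rw [hP1, hP2, Complex.add_re, Complex.add_re, Complex.re_sum, Complex.re_sum]
    have h1 : 0 ≤ ∑ l ∈ r, (BC.P1 ((α l - β l) * BC.dag3 (α l - β l))).re := by
      refine Finset.sum_nonneg fun l _ => ?_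
      rw [P1_self_dag3]
      exact Complex.normSq_nonneg _
    have h2 : 0 ≤ ∑ l ∈ r, (BC.P2 ((α l - β l) * BC.dag3 (α l - β l))).re := by
      refine Finset.sum_nonneg fun l _ => ?_
      rw [P2_self_dag3]
      exact Complex.normSq_nonneg _
    linarith
  unfold bnorm
  have h2 : (0:ℝ) ≤ 1 / Real.sqrt 2 := by positivity
  exact mul_le_mul_of_nonneg_left (Real.sqrt_le_sqrt hineq) h2
end

section
/- If N is a dense subspace of a bicomplex Hilbert space M and {|m_l⟩} is an orthonormal Schauder basis (over the bicomplex numbers) for N, then {|m_l⟩} is also an orthonormal Schauder basis for M; in particular every |φ⟩ ∈ M satisfies |φ⟩ = Σ_{l=1}^{∞} ⟨m_l|φ⟩|m_l⟩. -/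
namespace BCAux

open BC

theorem dag3_add (s t : BC) : dag3 (s + t) = dag3 s + dag3 t := by
  ext <;> simp [dag3] <;> ring

theorem dag3_mul (s t : BC) : dag3 (s * t) = dag3 s * dag3 t := by
  ext <;> simp [dag3] <;> ring

theorem dag3_zero : dag3 (0 : BC) = 0 := by ext <;> simp [dag3]

/-- The Euclidean square norm of a bicomplex number. -/
def eSq (w : BC) : ℝ := Complex.normSq w.re + Complex.normSq w.im

theorem eSq_nonneg (w : BC) : 0 ≤ eSq w :=
  add_nonneg (Complex.normSq_nonneg _) (Complex.normSq_nonneg _)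

theorem eSq_eq_zero {w : BC} (h : eSq w = 0) : w = 0 := by
  unfold eSq at h
  have h1 : Complex.normSq w.re = 0 ∧ Complex.normSq w.im = 0 := by
    constructor <;> nlinarith [Complex.normSq_nonneg w.re, Complex.normSq_nonneg w.im]
  ext <;> simp [← Complex.normSq_eq_zero, h1.1, h1.2]

theorem rere_dag3_mul_self (w : BC) : ((dag3 w * w).re).re = eSq w := by
  simp [dag3, eSq, Complex.sub_re, Complex.mul_re, Complex.normSq_apply,
    Complex.conj_re, Complex.conj_im]

variable {M : Type*} [AddCommGroup M] [Module BC M] (S : BCInner M)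

theorem inner_zero_right (ψ : M) : S.inner ψ 0 = 0 := by
  have h := S.smul_right 0 ψ 0
  simpa using h

theorem inner_smul_left (s : BC) (ψ φ : M) :
    S.inner (s • ψ) φ = dag3 s * S.inner ψ φ := by
  rw [S.conj_symm, S.smul_right, dag3_mul, ← S.conj_symm]

theorem inner_add_left (ψ χ φ : M) :
    S.inner (ψ + χ) φ = S.inner ψ φ + S.inner χ φ := by
  rw [S.conj_symm, S.add_right, dag3_add, ← S.conj_symm, ← S.conj_symm]

theorem inner_sum_right (ψ : M) {ι : Type*} (s : Finset ι) (f : ι → M) :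
    S.inner ψ (∑ i ∈ s, f i) = ∑ i ∈ s, S.inner ψ (f i) := by
  classical
  induction s using Finset.induction with
  | empty => simpa using inner_zero_right S ψ
  | @insert a s h ih =>
    rw [Finset.sum_insert h, Finset.sum_insert h, S.add_right, ih]

/-- The real bilinear form underlying the bicomplex scalar product. -/
def Bf (ψ φ : M) : ℝ := ((S.inner ψ φ).re).re

theorem Bf_symm (ψ φ : M) : Bf S ψ φ = Bf S φ ψ := by
  unfold Bf
  rw [S.conj_symm ψ φ]
  simp [dag3]

theorem Bf_add_right (ψ φ χ : M) : Bf S ψ (φ + χ) = Bf S ψ φ + Bf S ψ χ := by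
  unfold Bf; rw [S.add_right]; simp

theorem Bf_add_left (ψ χ φ : M) : Bf S (ψ + χ) φ = Bf S ψ φ + Bf S χ φ := by
  rw [Bf_symm, Bf_add_right, Bf_symm S φ ψ, Bf_symm S φ χ]

theorem Bf_rsmul_right (t : ℝ) (ψ φ : M) :
    Bf S ψ ((⟨(t : ℂ), 0⟩ : BC) • φ) = t * Bf S ψ φ := by
  unfold Bf; rw [S.smul_right]; simp

theorem Bf_nonneg (ψ : M) : 0 ≤ Bf S ψ ψ := by
  obtain ⟨h1, h2, h3, h4⟩ := S.hyper_pos ψ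
  have : (BC.P1 (S.inner ψ ψ)).re + (BC.P2 (S.inner ψ ψ)).re
      = 2 * Bf S ψ ψ := by
    simp [BC.P1, BC.P2, Bf, Complex.sub_re, Complex.add_re, Complex.mul_re]
    ring
  linarith

theorem bnorm_eq (φ : M) : bnorm S φ = Real.sqrt (Bf S φ φ) := by
  unfold bnorm
  have h : (BC.P1 (S.inner φ φ)).re + (BC.P2 (S.inner φ φ)).re
      = 2 * Bf S φ φ := by
    simp [BC.P1, BC.P2, Bf, Complex.sub_re, Complex.add_re, Complex.mul_re]
    ring
  rw [h, Real.sqrt_mul (by norm_num : (0:ℝ) ≤ 2)]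
  rw [one_div, ← mul_assoc,
    inv_mul_cancel₀ (by positivity : Real.sqrt 2 ≠ 0), one_mul]

theorem bnorm_nonneg (φ : M) : 0 ≤ bnorm S φ := by
  rw [bnorm_eq]; exact Real.sqrt_nonneg _

theorem bnorm_sq (φ : M) : bnorm S φ ^ 2 = Bf S φ φ := by
  rw [bnorm_eq, Real.sq_sqrt (Bf_nonneg S φ)]

theorem Bf_cauchy_schwarz (x y : M) :
    Bf S x y ^ 2 ≤ Bf S x x * Bf S y y := by
  have key : ∀ t : ℝ, 0 ≤ Bf S y y * (t * t) + (2 * Bf S x y) * t + Bf S x x := by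
    intro t
    have h := Bf_nonneg S (x + (⟨(t : ℂ), 0⟩ : BC) • y)
    rw [Bf_add_left, Bf_add_right, Bf_add_right,
        Bf_symm S ((⟨(t : ℂ), 0⟩ : BC) • y) x, Bf_rsmul_right,
        Bf_rsmul_right, Bf_symm S ((⟨(t : ℂ), 0⟩ : BC) • y) y,
        Bf_rsmul_right] at h
    nlinarith [h]
  have hd := discrim_le_zero key
  unfold discrim at hd
  nlinarith [hd]

theorem bnorm_triangle (x y : M) : bnorm S (x + y) ≤ bnorm S x + bnorm S y := by
  have hcs : Bf S x y ≤ Real.sqrt (Bf S x x) * Real.sqrt (Bf S y y) := by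
    have h1 : Bf S x y ≤ |Bf S x y| := le_abs_self _
    have h2 : |Bf S x y| = Real.sqrt (Bf S x y ^ 2) := by
      rw [Real.sqrt_sq_eq_abs]
    calc Bf S x y ≤ Real.sqrt (Bf S x y ^ 2) := by rw [← h2]; exact h1
      _ ≤ Real.sqrt (Bf S x x * Bf S y y) :=
          Real.sqrt_le_sqrt (Bf_cauchy_schwarz S x y)
      _ = Real.sqrt (Bf S x x) * Real.sqrt (Bf S y y) :=
          Real.sqrt_mul (Bf_nonneg S x) _
  rw [bnorm_eq, bnorm_eq, bnorm_eq]
  have hexp : Bf S (x + y) (x + y) = Bf S x x + 2 * Bf S x y + Bf S y y := by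
    rw [Bf_add_left, Bf_add_right, Bf_add_right, Bf_symm S y x]; ring
  have hle : Bf S (x + y) (x + y)
      ≤ (Real.sqrt (Bf S x x) + Real.sqrt (Bf S y y)) ^ 2 := by
    rw [hexp]
    have hx := Real.sq_sqrt (Bf_nonneg S x)
    have hy := Real.sq_sqrt (Bf_nonneg S y)
    nlinarith [hcs]
  calc Real.sqrt (Bf S (x + y) (x + y))
      ≤ Real.sqrt ((Real.sqrt (Bf S x x) + Real.sqrt (Bf S y y)) ^ 2) :=
        Real.sqrt_le_sqrt hle
    _ = Real.sqrt (Bf S x x) + Real.sqrt (Bf S y y) := by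
        rw [Real.sqrt_sq (by positivity)]

theorem bnorm_mono {x y : M} (h : Bf S x x ≤ Bf S y y) : bnorm S x ≤ bnorm S y := by
  rw [bnorm_eq, bnorm_eq]; exact Real.sqrt_le_sqrt h


theorem inner_zero_left (φ : M) : S.inner 0 φ = 0 := by
  rw [S.conj_symm, inner_zero_right, dag3_zero]

theorem inner_sum_left {ι : Type*} (s : Finset ι) (f : ι → M) (ψ : M) :
    S.inner (∑ i ∈ s, f i) ψ = ∑ i ∈ s, S.inner (f i) ψ := by
  classical
  induction s using Finset.induction with
  | empty => simpa using inner_zero_left S ψ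
  | @insert a s h ih =>
    rw [Finset.sum_insert h, Finset.sum_insert h, inner_add_left, ih]

theorem inner_sub_right (ψ φ χ : M) :
    S.inner ψ (φ - χ) = S.inner ψ φ - S.inner ψ χ := by
  rw [sub_eq_add_neg, S.add_right, ← neg_one_smul BC χ, S.smul_right]
  ring

theorem bnorm_sub_comm (x y : M) : bnorm S (x - y) = bnorm S (y - x) := by
  rw [bnorm_eq, bnorm_eq]
  congr 1
  have h : x - y = (-1 : BC) • (y - x) := by rw [neg_one_smul]; abel
  rw [h]
  unfold Bf
  rw [inner_smul_left, S.smul_right]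
  have hd : dag3 (-1 : BC) = -1 := by ext <;> simp [dag3]
  rw [hd]
  simp

/-- The additive hom `w ↦ w.re.re`. -/
def rereHom : BC →+ ℝ where
  toFun w := w.re.re
  map_zero' := by simp
  map_add' s t := by simp

section Orth

variable (m : ℕ → M)

theorem coeff_of_partial (horth : ∀ l p : ℕ, S.inner (m l) (m p) = if l = p then 1 else 0) (α : ℕ → BC) {l n : ℕ} (hl : l ∈ Finset.range n) :
    S.inner (m l) (∑ p ∈ Finset.range n, α p • m p) = α l := by
  rw [inner_sum_right]
  simp only [S.smul_right, horth, mul_ite, mul_one, mul_zero]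
  simp [Finset.sum_ite_eq, hl]

theorem resid_orth (horth : ∀ l p : ℕ, S.inner (m l) (m p) = if l = p then 1 else 0) (φ : M) {l n : ℕ} (hl : l ∈ Finset.range n) :
    S.inner (m l) (φ - ∑ p ∈ Finset.range n, S.inner (m p) φ • m p) = 0 := by
  rw [inner_sub_right, coeff_of_partial S m horth _ hl, sub_self]

theorem cross_orth (horth : ∀ l p : ℕ, S.inner (m l) (m p) = if l = p then 1 else 0) (φ : M) (n : ℕ) (β : ℕ → BC) :
    S.inner (φ - ∑ p ∈ Finset.range n, S.inner (m p) φ • m p)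
      (∑ p ∈ Finset.range n, β p • m p) = 0 := by
  rw [inner_sum_right]
  apply Finset.sum_eq_zero
  intro p hp
  rw [S.smul_right, S.conj_symm, resid_orth S m horth φ hp, dag3_zero, mul_zero]

theorem sum_sub_sum (n : ℕ) (γ α : ℕ → BC) :
    (∑ p ∈ Finset.range n, γ p • m p) - (∑ p ∈ Finset.range n, α p • m p)
      = ∑ p ∈ Finset.range n, (γ p - α p) • m p := by
  rw [← Finset.sum_sub_distrib]
  exact Finset.sum_congr rfl fun p _ => (sub_smul _ _ _).symm

theorem bnorm_partial_min (horth : ∀ l p : ℕ, S.inner (m l) (m p) = if l = p then 1 else 0) (φ : M) (n : ℕ) (α : ℕ → BC) :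
    bnorm S (φ - ∑ p ∈ Finset.range n, S.inner (m p) φ • m p)
      ≤ bnorm S (φ - ∑ p ∈ Finset.range n, α p • m p) := by
  apply bnorm_mono
  set s := ∑ p ∈ Finset.range n, S.inner (m p) φ • m p with hs
  set t := ∑ p ∈ Finset.range n, α p • m p with ht
  have hdecomp : φ - t = (φ - s) + (s - t) := by abel
  have hst : s - t = ∑ p ∈ Finset.range n, (S.inner (m p) φ - α p) • m p :=
    sum_sub_sum m n _ α
  have hcross : Bf S (φ - s) (s - t) = 0 := by
    unfold Bf
    rw [hst, cross_orth S m horth φ n]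
    simp
  have hcross' : Bf S (s - t) (φ - s) = 0 := by rw [Bf_symm, hcross]
  rw [hdecomp, Bf_add_left, Bf_add_right, Bf_add_right, hcross, hcross']
  have := Bf_nonneg S (s - t)
  linarith

theorem bnorm_comb_sq (horth : ∀ l p : ℕ, S.inner (m l) (m p) = if l = p then 1 else 0) (n : ℕ) (δ : ℕ → BC) :
    Bf S (∑ p ∈ Finset.range n, δ p • m p) (∑ p ∈ Finset.range n, δ p • m p)
      = ∑ p ∈ Finset.range n, eSq (δ p) := by
  unfold Bf
  rw [inner_sum_left]
  have hterm : ∀ p ∈ Finset.range n,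
      S.inner (δ p • m p) (∑ q ∈ Finset.range n, δ q • m q)
        = dag3 (δ p) * δ p := by
    intro p hp
    rw [inner_smul_left, coeff_of_partial S m horth δ hp]
  rw [Finset.sum_congr rfl hterm]
  have hmap := map_sum rereHom (fun p => dag3 (δ p) * δ p) (Finset.range n)
  simp only [rereHom, AddMonoidHom.coe_mk, ZeroHom.coe_mk] at hmap
  rw [hmap]
  exact Finset.sum_congr rfl fun p _ => rere_dag3_mul_self _

end Orth

end BCAux

/-- an orthonormal Schauder basis of a dense subspace `N` of a bicomplex
Hilbert space `M` is an orthonormal Schauder basis of `M`; in particular every `φ ∈ M`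
satisfies `φ = Σ ⟨m_l|φ⟩ m_l`. -/
theorem bicomplex_dense_basis {M : Type*} [AddCommGroup M] [Module BC M]
    (S : BCInner M) (hcomplete : BCComplete S)
    (N : Submodule BC M)
    (hdense : ∀ φ : M, ∀ ε > 0, ∃ ψ ∈ N, bnorm S (φ - ψ) < ε)
    (m : ℕ → M) (hmem : ∀ l, m l ∈ N)
    (horth : ∀ l p : ℕ, S.inner (m l) (m p) = if l = p then 1 else 0)
    (hbasisN : ∀ ψ ∈ N, ∃! α : ℕ → BC,
      Filter.Tendsto (fun n => bnorm S (ψ - ∑ l ∈ Finset.range n, α l • m l))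
        Filter.atTop (nhds 0)) :
    (∀ φ : M, ∃! α : ℕ → BC,
      Filter.Tendsto (fun n => bnorm S (φ - ∑ l ∈ Finset.range n, α l • m l))
        Filter.atTop (nhds 0)) ∧
    (∀ φ : M,
      Filter.Tendsto (fun n => bnorm S (φ - ∑ l ∈ Finset.range n, S.inner (m l) φ • m l))
        Filter.atTop (nhds 0)) := by
  classical
  have hexist : ∀ φ : M,
      Filter.Tendsto (fun n => bnorm S (φ - ∑ l ∈ Finset.range n, S.inner (m l) φ • m l))
        Filter.atTop (nhds 0) := by
    intro φ
    rw [Metric.tendsto_atTop]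
    intro ε hε
    obtain ⟨ψ, hψN, hψ⟩ := hdense φ (ε / 2) (by linarith)
    obtain ⟨α, hα, -⟩ := hbasisN ψ hψN
    rw [Metric.tendsto_atTop] at hα
    obtain ⟨N₀, hN₀⟩ := hα (ε / 2) (by linarith)
    refine ⟨N₀, fun n hn => ?_⟩
    rw [Real.dist_eq, sub_zero, abs_of_nonneg (BCAux.bnorm_nonneg S _)]
    have h1 := BCAux.bnorm_partial_min S m horth φ n α
    have h2 : φ - ∑ l ∈ Finset.range n, α l • m l
        = (φ - ψ) + (ψ - ∑ l ∈ Finset.range n, α l • m l) := by abel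
    have h3 := BCAux.bnorm_triangle S (φ - ψ) (ψ - ∑ l ∈ Finset.range n, α l • m l)
    have h4 := hN₀ n hn
    rw [Real.dist_eq, sub_zero, abs_of_nonneg (BCAux.bnorm_nonneg S _)] at h4
    calc bnorm S (φ - ∑ l ∈ Finset.range n, S.inner (m l) φ • m l)
        ≤ bnorm S (φ - ∑ l ∈ Finset.range n, α l • m l) := h1
      _ ≤ bnorm S (φ - ψ) + bnorm S (ψ - ∑ l ∈ Finset.range n, α l • m l) := by
          rw [h2]; exact h3
      _ < ε := by linarith
  refine ⟨fun φ => ?_, hexist⟩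
  refine ⟨fun l => S.inner (m l) φ, hexist φ, ?_⟩
  intro α hα
  funext l
  set δ : ℕ → BC := fun p => S.inner (m p) φ - α p with hδ
  set u : ℕ → M := fun n => ∑ p ∈ Finset.range n, δ p • m p with hu
  have hu_eq : ∀ n, u n
      = (∑ p ∈ Finset.range n, S.inner (m p) φ • m p)
        - ∑ p ∈ Finset.range n, α p • m p := by
    intro n
    rw [BCAux.sum_sub_sum m n _ α]
  have htend0 : Filter.Tendsto (fun n => bnorm S (u n)) Filter.atTop (nhds 0) := by
    have hg : Filter.Tendsto (fun n =>
        bnorm S (φ - ∑ p ∈ Finset.range n, S.inner (m p) φ • m p)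
          + bnorm S (φ - ∑ p ∈ Finset.range n, α p • m p))
        Filter.atTop (nhds 0) := by
      have := (hexist φ).add hα
      simpa using this
    refine squeeze_zero (fun n => BCAux.bnorm_nonneg S _) (fun n => ?_) hg
    have hsplit : u n
        = ((∑ p ∈ Finset.range n, S.inner (m p) φ • m p) - φ)
          + (φ - ∑ p ∈ Finset.range n, α p • m p) := by
      rw [hu_eq]; abel
    calc bnorm S (u n)
        ≤ bnorm S ((∑ p ∈ Finset.range n, S.inner (m p) φ • m p) - φ)
          + bnorm S (φ - ∑ p ∈ Finset.range n, α p • m p) := by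
          rw [hsplit]; exact BCAux.bnorm_triangle S _ _
      _ = bnorm S (φ - ∑ p ∈ Finset.range n, S.inner (m p) φ • m p)
          + bnorm S (φ - ∑ p ∈ Finset.range n, α p • m p) := by
          rw [BCAux.bnorm_sub_comm]
  have htend_sq : Filter.Tendsto (fun n => bnorm S (u n) ^ 2) Filter.atTop (nhds 0) := by
    simpa using htend0.pow 2
  have hbound : ∀ᶠ n in Filter.atTop, BCAux.eSq (δ l) ≤ bnorm S (u n) ^ 2 := by
    rw [Filter.eventually_atTop]
    refine ⟨l + 1, fun n hn => ?_⟩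
    rw [BCAux.bnorm_sq, hu, BCAux.bnorm_comb_sq S m horth n δ]
    exact Finset.single_le_sum (fun p _ => BCAux.eSq_nonneg (δ p))
      (Finset.mem_range.mpr (by omega))
  have hle : BCAux.eSq (δ l) ≤ 0 := ge_of_tendsto htend_sq hbound
  have hzero : δ l = 0 := BCAux.eSq_eq_zero (le_antisymm hle (BCAux.eSq_nonneg _))
  have := sub_eq_zero.mp hzero
  exact this.symm
end

section
/- The space l²₂ of bicomplex sequences {w_l} with Σ|w_l|² < ∞ (with |·| the Euclidean norm on bicomplex numbers) is a bicomplex Hilbert space; moreover its ℓ²-norm ‖{w_l}‖₂ = (Σ|w_l|²)^{1/2} coincides with the induced bicomplex Hilbert norm coming from the decomposition (l²₂)' = (e₁ℓ²) ⊕ (e₂ℓ²). -/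
/-- Topology on the bicomplex numbers induced from `ℂ × ℂ` (the Euclidean topology). -/
noncomputable instance : TopologicalSpace BC :=
  TopologicalSpace.induced (fun w => (w.re, w.im)) inferInstance

namespace BCAux

open Filter Topology

/-- The identification of `BC` with `ℂ × ℂ`. -/
def toC2 (w : BC) : ℂ × ℂ := (w.re, w.im)

/-- `toC2` as an additive monoid hom. -/
def toC2Hom : BC →+ ℂ × ℂ where
  toFun := toC2
  map_zero' := rfl
  map_add' _ _ := rfl

lemma inducing_toC2 : Topology.IsInducing toC2 := ⟨rfl⟩

lemma inj_toC2 : Function.Injective toC2 := fun a b h =>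
  BC.ext (congrArg Prod.fst h) (congrArg Prod.snd h)

instance : T2Space BC := T2Space.of_injective_continuous inj_toC2 inducing_toC2.continuous

lemma hasSum_BC {g : ℕ → BC} {a : ℂ × ℂ}
    (h : HasSum (fun l => toC2 (g l)) a) : HasSum g ⟨a.1, a.2⟩ := by
  rw [HasSum, inducing_toC2.tendsto_nhds_iff]
  have he : (fun s : Finset ℕ => toC2 (∑ l ∈ s, g l)) = fun s => ∑ l ∈ s, toC2 (g l) := by
    funext s; exact map_sum toC2Hom g s
  show Tendsto (fun s : Finset ℕ => toC2 (∑ l ∈ s, g l)) atTop (nhds (toC2 ⟨a.1, a.2⟩))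
  rw [he]
  exact h

lemma enorm_sq (w : BC) :
    BC.enorm w ^ 2 = ‖w.re‖ ^ 2 + ‖w.im‖ ^ 2 :=
  Real.sq_sqrt (by positivity)

lemma re_sq_le (w : BC) : ‖w.re‖ ^ 2 ≤ BC.enorm w ^ 2 := by
  rw [enorm_sq]; exact le_add_of_nonneg_right (by positivity)

lemma im_sq_le (w : BC) : ‖w.im‖ ^ 2 ≤ BC.enorm w ^ 2 := by
  rw [enorm_sq]; exact le_add_of_nonneg_left (by positivity)

lemma summable_re {w : ℕ → BC} (h : Summable fun l => BC.enorm (w l) ^ 2) :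
    Summable fun l => ‖(w l).re‖ ^ 2 :=
  Summable.of_nonneg_of_le (fun l => by positivity) (fun l => re_sq_le (w l)) h

lemma summable_im {w : ℕ → BC} (h : Summable fun l => BC.enorm (w l) ^ 2) :
    Summable fun l => ‖(w l).im‖ ^ 2 :=
  Summable.of_nonneg_of_le (fun l => by positivity) (fun l => im_sq_le (w l)) h

lemma enorm_add_sq_le (a b : BC) :
    BC.enorm (a + b) ^ 2 ≤ 2 * BC.enorm a ^ 2 + 2 * BC.enorm b ^ 2 := by
  simp only [enorm_sq, BC.add_re, BC.add_im]
  have h1 := norm_add_le a.re b.re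
  have h2 := norm_add_le a.im b.im
  have n1 := norm_nonneg (a.re + b.re)
  have n2 := norm_nonneg (a.im + b.im)
  nlinarith [sq_nonneg (‖a.re‖ - ‖b.re‖),
    sq_nonneg (‖a.im‖ - ‖b.im‖),
    norm_nonneg a.re, norm_nonneg b.re,
    norm_nonneg a.im, norm_nonneg b.im]

lemma summable_add {w v : ℕ → BC} (hw : Summable fun l => BC.enorm (w l) ^ 2)
    (hv : Summable fun l => BC.enorm (v l) ^ 2) :
    Summable fun l => BC.enorm (w l + v l) ^ 2 :=
  Summable.of_nonneg_of_le (fun l => by positivity)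
    (fun l => enorm_add_sq_le (w l) (v l)) ((hw.mul_left 2).add (hv.mul_left 2))

lemma enorm_mul_sq_le (s w : BC) :
    BC.enorm (s * w) ^ 2 ≤ 2 * BC.enorm s ^ 2 * BC.enorm w ^ 2 := by
  simp only [enorm_sq, BC.mul_re, BC.mul_im]
  set a := ‖s.re‖
  set b := ‖s.im‖
  set c := ‖w.re‖
  set d := ‖w.im‖
  have h1 : ‖s.re * w.re - s.im * w.im‖ ≤ a * c + b * d := by
    calc ‖s.re * w.re - s.im * w.im‖
        ≤ ‖s.re * w.re‖ + ‖s.im * w.im‖ :=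
          norm_sub_le _ _
      _ = a * c + b * d := by simp [a, b, c, d, map_mul]
  have h2 : ‖s.re * w.im + s.im * w.re‖ ≤ a * d + b * c := by
    calc ‖s.re * w.im + s.im * w.re‖
        ≤ ‖s.re * w.im‖ + ‖s.im * w.re‖ :=
          norm_add_le _ _
      _ = a * d + b * c := by simp [a, b, c, d, map_mul]
  have n1 := norm_nonneg (s.re * w.re - s.im * w.im)
  have n2 := norm_nonneg (s.re * w.im + s.im * w.re)
  have ha : 0 ≤ a := norm_nonneg _
  have hb : 0 ≤ b := norm_nonneg _
  have hc : 0 ≤ c := norm_nonneg _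
  have hd : 0 ≤ d := norm_nonneg _
  nlinarith [sq_nonneg (a * d - b * c), sq_nonneg (a * c - b * d),
    mul_nonneg (mul_nonneg ha hc) (mul_nonneg hb hd),
    mul_nonneg (mul_nonneg ha hd) (mul_nonneg hb hc)]

lemma summable_smul (s : BC) {w : ℕ → BC} (hw : Summable fun l => BC.enorm (w l) ^ 2) :
    Summable fun l => BC.enorm (s * w l) ^ 2 :=
  Summable.of_nonneg_of_le (fun l => by positivity)
    (fun l => enorm_mul_sq_le s (w l)) (hw.mul_left _)

lemma summable_prod_abs {x y : ℕ → ℂ} (hx : Summable fun l => ‖x l‖ ^ 2)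
    (hy : Summable fun l => ‖y l‖ ^ 2) :
    Summable fun l => (starRingEnd ℂ) (x l) * y l := by
  apply Summable.of_norm
  refine Summable.of_nonneg_of_le (fun l => norm_nonneg _) (fun l => ?_)
    (((hx.add hy).div_const 2))
  rw [norm_mul, Complex.norm_conj]
  nlinarith [sq_nonneg (‖x l‖ - ‖y l‖),
    norm_nonneg (x l), norm_nonneg (y l)]

lemma toC2_dag3_mul (w v : BC) :
    toC2 (BC.dag3 w * v) =
      ((starRingEnd ℂ) w.re * v.re + (starRingEnd ℂ) w.im * v.im,
       (starRingEnd ℂ) w.re * v.im - (starRingEnd ℂ) w.im * v.re) := by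
  simp only [toC2, BC.dag3, BC.mul_re, BC.mul_im]
  rw [Prod.mk.injEq]
  constructor <;> ring

/-- The inner-product series `Σ (w_l)^{†₃} v_l` converges, with explicit sum. -/
lemma hasSum_inner {w v : ℕ → BC} (hw : Summable fun l => BC.enorm (w l) ^ 2)
    (hv : Summable fun l => BC.enorm (v l) ^ 2) :
    HasSum (fun l => BC.dag3 (w l) * v l)
      ⟨∑' l, ((starRingEnd ℂ) (w l).re * (v l).re + (starRingEnd ℂ) (w l).im * (v l).im),
       ∑' l, ((starRingEnd ℂ) (w l).re * (v l).im - (starRingEnd ℂ) (w l).im * (v l).re)⟩ := by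
  have hA : Summable fun l =>
      ((starRingEnd ℂ) (w l).re * (v l).re + (starRingEnd ℂ) (w l).im * (v l).im) :=
    (summable_prod_abs (summable_re hw) (summable_re hv)).add
      (summable_prod_abs (summable_im hw) (summable_im hv))
  have hB : Summable fun l =>
      ((starRingEnd ℂ) (w l).re * (v l).im - (starRingEnd ℂ) (w l).im * (v l).re) :=
    (summable_prod_abs (summable_re hw) (summable_im hv)).sub
      (summable_prod_abs (summable_im hw) (summable_re hv))
  have hpair := hA.hasSum.prodMk hB.hasSum
  have := hasSum_BC (g := fun l => BC.dag3 (w l) * v l)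
    (a := (∑' l, ((starRingEnd ℂ) (w l).re * (v l).re + (starRingEnd ℂ) (w l).im * (v l).im),
      ∑' l, ((starRingEnd ℂ) (w l).re * (v l).im - (starRingEnd ℂ) (w l).im * (v l).re)))
    (by simpa only [toC2_dag3_mul] using hpair)
  exact this

lemma summable_inner {w v : ℕ → BC} (hw : Summable fun l => BC.enorm (w l) ^ 2)
    (hv : Summable fun l => BC.enorm (v l) ^ 2) :
    Summable fun l => BC.dag3 (w l) * v l :=
  ⟨_, hasSum_inner hw hv⟩

lemma inner_self_re (w : BC) :
    ((starRingEnd ℂ) w.re * w.re + (starRingEnd ℂ) w.im * w.im).re = BC.enorm w ^ 2 := by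
  rw [enorm_sq]
  simp only [Complex.add_re, Complex.mul_re, Complex.conj_re, Complex.conj_im,
    Complex.sq_norm, Complex.normSq_apply]
  ring

lemma P_sum (A B : ℂ) : (BC.P1 ⟨A, B⟩).re + (BC.P2 ⟨A, B⟩).re = 2 * A.re := by
  simp only [BC.P1, BC.P2, Complex.sub_re, Complex.add_re, Complex.mul_re,
    Complex.I_re, Complex.I_im]
  ring

lemma norm_eq {w : ℕ → BC} (hw : Summable fun l => BC.enorm (w l) ^ 2) :
    Real.sqrt (∑' l, BC.enorm (w l) ^ 2) =
      (1 / Real.sqrt 2) * Real.sqrt ((BC.P1 (∑' l, BC.dag3 (w l) * w l)).re +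
        (BC.P2 (∑' l, BC.dag3 (w l) * w l)).re) := by
  have hs := hasSum_inner hw hw
  rw [hs.tsum_eq]
  have hA : Summable fun l =>
      ((starRingEnd ℂ) (w l).re * (w l).re + (starRingEnd ℂ) (w l).im * (w l).im) :=
    (summable_prod_abs (summable_re hw) (summable_re hw)).add
      (summable_prod_abs (summable_im hw) (summable_im hw))
  have hre := Complex.hasSum_re hA.hasSum
  have hre' : HasSum (fun l => BC.enorm (w l) ^ 2)
      (∑' l, ((starRingEnd ℂ) (w l).re * (w l).re +
        (starRingEnd ℂ) (w l).im * (w l).im)).re := by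
    refine HasSum.congr_fun hre fun l => (inner_self_re (w l)).symm
  have htsum : ∑' l, BC.enorm (w l) ^ 2 =
      (∑' l, ((starRingEnd ℂ) (w l).re * (w l).re +
        (starRingEnd ℂ) (w l).im * (w l).im)).re := hre'.tsum_eq
  set x := ∑' l, BC.enorm (w l) ^ 2 with hx
  rw [P_sum, ← htsum]
  have hx0 : 0 ≤ x := tsum_nonneg fun l => by positivity
  rw [Real.sqrt_mul (by norm_num : (0:ℝ) ≤ 2) x,
    ← mul_assoc, one_div, inv_mul_cancel₀ (Real.sqrt_ne_zero'.mpr (by norm_num)), one_mul]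

open scoped ENNReal in
lemma rp2 (x : ℝ) : x ^ ((2 : ℝ≥0∞)).toReal = x ^ 2 := by
  rw [show ((2 : ℝ≥0∞)).toReal = ((2 : ℕ) : ℝ) by simp, Real.rpow_natCast]

lemma mem_re {w : ℕ → BC} (h : Summable fun l => BC.enorm (w l) ^ 2) :
    Memℓp (fun l => (w l).re) 2 :=
  memℓp_gen (by simpa [rp2] using summable_re h)

lemma mem_im {w : ℕ → BC} (h : Summable fun l => BC.enorm (w l) ^ 2) :
    Memℓp (fun l => (w l).im) 2 :=
  memℓp_gen (by simpa [rp2] using summable_im h)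

lemma lp_norm_sq (g : lp (fun _ : ℕ => ℂ) 2) : ‖g‖ ^ 2 = ∑' l, ‖g l‖ ^ 2 := by
  have h := lp.norm_rpow_eq_tsum (p := 2) (by simp) g
  simpa [rp2] using h

lemma summable_of_lp (g : lp (fun _ : ℕ => ℂ) 2) :
    Summable fun l => ‖g l‖ ^ 2 := by
  have := (lp.memℓp g).summable (p := 2) (by simp)
  simpa [rp2] using this

lemma sub_re' (a b : BC) : (a - b).re = a.re - b.re := by
  rw [sub_eq_add_neg, BC.add_re, BC.neg_re, sub_eq_add_neg]

lemma sub_im' (a b : BC) : (a - b).im = a.im - b.im := by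
  rw [sub_eq_add_neg, BC.add_im, BC.neg_im, sub_eq_add_neg]

lemma enorm_neg (w : BC) : BC.enorm (-w) = BC.enorm w := by
  simp [BC.enorm, BC.neg_re, BC.neg_im]

lemma summable_sub {w v : ℕ → BC} (hw : Summable fun l => BC.enorm (w l) ^ 2)
    (hv : Summable fun l => BC.enorm (v l) ^ 2) :
    Summable fun l => BC.enorm (w l - v l) ^ 2 := by
  have := summable_add hw (w := w) (v := fun l => -(v l)) (by simpa [enorm_neg] using hv)
  simpa [sub_eq_add_neg] using this

lemma complete (f : ℕ → ℕ → BC) (hmem : ∀ n, Summable fun l => BC.enorm (f n l) ^ 2)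
    (hc : ∀ ε > 0, ∃ N : ℕ, ∀ i ≥ N, ∀ j ≥ N,
      Real.sqrt (∑' l, BC.enorm (f i l - f j l) ^ 2) < ε) :
    ∃ w : ℕ → BC, (Summable fun l => BC.enorm (w l) ^ 2) ∧
      Filter.Tendsto (fun n => Real.sqrt (∑' l, BC.enorm (f n l - w l) ^ 2))
        Filter.atTop (nhds 0) := by
  let G : ℕ → lp (fun _ : ℕ => ℂ) 2 := fun n => ⟨fun l => (f n l).re, mem_re (hmem n)⟩
  let H : ℕ → lp (fun _ : ℕ => ℂ) 2 := fun n => ⟨fun l => (f n l).im, mem_im (hmem n)⟩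
  have hGsub : ∀ i j l, (G i - G j) l = (f i l - f j l).re := by
    intro i j l
    rw [lp.coeFn_sub, Pi.sub_apply, sub_re']
  have hHsub : ∀ i j l, (H i - H j) l = (f i l - f j l).im := by
    intro i j l
    rw [lp.coeFn_sub, Pi.sub_apply, sub_im']
  have hkeyG : ∀ i j, ‖G i - G j‖ ≤ Real.sqrt (∑' l, BC.enorm (f i l - f j l) ^ 2) := by
    intro i j
    rw [show ‖G i - G j‖ = Real.sqrt (‖G i - G j‖ ^ 2) from
      (Real.sqrt_sq (norm_nonneg _)).symm, lp_norm_sq]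
    apply Real.sqrt_le_sqrt
    refine Summable.tsum_le_tsum (fun l => ?_) (summable_of_lp _) (summable_sub (hmem i) (hmem j))
    rw [hGsub]
    exact re_sq_le _
  have hkeyH : ∀ i j, ‖H i - H j‖ ≤ Real.sqrt (∑' l, BC.enorm (f i l - f j l) ^ 2) := by
    intro i j
    rw [show ‖H i - H j‖ = Real.sqrt (‖H i - H j‖ ^ 2) from
      (Real.sqrt_sq (norm_nonneg _)).symm, lp_norm_sq]
    apply Real.sqrt_le_sqrt
    refine Summable.tsum_le_tsum (fun l => ?_) (summable_of_lp _) (summable_sub (hmem i) (hmem j))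
    rw [hHsub]
    exact im_sq_le _
  have hGc : CauchySeq G := by
    rw [Metric.cauchySeq_iff]
    intro ε hε
    obtain ⟨N, hN⟩ := hc ε hε
    exact ⟨N, fun i hi j hj =>
      lt_of_le_of_lt (by rw [dist_eq_norm]; exact hkeyG i j) (hN i hi j hj)⟩
  have hHc : CauchySeq H := by
    rw [Metric.cauchySeq_iff]
    intro ε hε
    obtain ⟨N, hN⟩ := hc ε hε
    exact ⟨N, fun i hi j hj =>
      lt_of_le_of_lt (by rw [dist_eq_norm]; exact hkeyH i j) (hN i hi j hj)⟩
  obtain ⟨gre, hgre⟩ := cauchySeq_tendsto_of_complete hGc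
  obtain ⟨gim, hgim⟩ := cauchySeq_tendsto_of_complete hHc
  refine ⟨fun l => ⟨gre l, gim l⟩, ?_, ?_⟩
  · have : Summable fun l => ‖gre l‖ ^ 2 + ‖gim l‖ ^ 2 :=
      (summable_of_lp gre).add (summable_of_lp gim)
    refine this.congr fun l => ?_
    rw [enorm_sq]
  · have hGn : Tendsto (fun n => ‖G n - gre‖) atTop (nhds 0) :=
      tendsto_iff_norm_sub_tendsto_zero.mp hgre
    have hHn : Tendsto (fun n => ‖H n - gim‖) atTop (nhds 0) :=
      tendsto_iff_norm_sub_tendsto_zero.mp hgim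
    have key : ∀ n, ∑' l, BC.enorm (f n l - ⟨gre l, gim l⟩) ^ 2 =
        ‖G n - gre‖ ^ 2 + ‖H n - gim‖ ^ 2 := by
      intro n
      have h1 : ∀ l, BC.enorm (f n l - ⟨gre l, gim l⟩) ^ 2 =
          ‖(G n - gre) l‖ ^ 2 + ‖(H n - gim) l‖ ^ 2 := by
        intro l
        rw [enorm_sq, sub_re', sub_im']
        have e1 : (G n - gre) l = (f n l).re - gre l := by
          rw [lp.coeFn_sub, Pi.sub_apply]
        have e2 : (H n - gim) l = (f n l).im - gim l := by
          rw [lp.coeFn_sub, Pi.sub_apply]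
        rw [e1, e2]
      rw [tsum_congr h1, Summable.tsum_add (summable_of_lp _) (summable_of_lp _),
        lp_norm_sq, lp_norm_sq]
    have hlim : Tendsto (fun n => ‖G n - gre‖ ^ 2 + ‖H n - gim‖ ^ 2) atTop (nhds 0) := by
      have := (hGn.pow 2).add (hHn.pow 2)
      simpa using this
    have hsq := hlim.sqrt
    rw [Real.sqrt_zero] at hsq
    refine hsq.congr fun n => ?_
    rw [← key n]

end BCAux

/-- the space `l²₂` of square-summable bicomplex sequences is a bicomplex
Hilbert space, and its `ℓ²`-norm coincides with the induced bicomplex Hilbert norm. -/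
theorem bicomplex_l22_hilbert :
    -- closure under addition and bicomplex scalar multiplication (module structure)
    (∀ w v : ℕ → BC, (Summable fun l => (BC.enorm (w l)) ^ 2) →
      (Summable fun l => (BC.enorm (v l)) ^ 2) →
      Summable fun l => (BC.enorm (w l + v l)) ^ 2) ∧
    (∀ (s : BC) (w : ℕ → BC), (Summable fun l => (BC.enorm (w l)) ^ 2) →
      Summable fun l => (BC.enorm (s * w l)) ^ 2) ∧
    -- the bicomplex scalar product `⟨w|v⟩ = Σ (w_l)^{†₃} v_l` is defined on `l²₂`
    (∀ w v : ℕ → BC, (Summable fun l => (BC.enorm (w l)) ^ 2) →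
      (Summable fun l => (BC.enorm (v l)) ^ 2) →
      Summable fun l => BC.dag3 (w l) * v l) ∧
    -- the ℓ²-norm coincides with the induced bicomplex norm `(1/√2)√(|φ₁|₁² + |φ₂|₂²)`
    (∀ w : ℕ → BC, (Summable fun l => (BC.enorm (w l)) ^ 2) →
      Real.sqrt (∑' l, (BC.enorm (w l)) ^ 2) =
        (1 / Real.sqrt 2) *
          Real.sqrt ((BC.P1 (∑' l, BC.dag3 (w l) * w l)).re +
            (BC.P2 (∑' l, BC.dag3 (w l) * w l)).re)) ∧
    -- completeness of `l²₂` for the ℓ²-norm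
    (∀ f : ℕ → (ℕ → BC), (∀ n, Summable fun l => (BC.enorm (f n l)) ^ 2) →
      (∀ ε > 0, ∃ N : ℕ, ∀ i ≥ N, ∀ j ≥ N,
        Real.sqrt (∑' l, (BC.enorm (f i l - f j l)) ^ 2) < ε) →
      ∃ w : ℕ → BC, (Summable fun l => (BC.enorm (w l)) ^ 2) ∧
        Filter.Tendsto (fun n => Real.sqrt (∑' l, (BC.enorm (f n l - w l)) ^ 2))
          Filter.atTop (nhds 0)) :=
  ⟨fun _ _ hw hv => BCAux.summable_add hw hv,
   fun s _ hw => BCAux.summable_smul s hw,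
   fun _ _ hw hv => BCAux.summable_inner hw hv,
   fun _ hw => BCAux.norm_eq hw,
   BCAux.complete⟩
end
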